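/- (The widest path can be solved via the generalized Bellman–Ford algorithm.) For all vertices u, v : V, the (max, min) Bellman–Ford iterates are entrywise monotone nondecreasing in t and converge to the widest-path value, i.e., ⨆_{t : ℕ} (W_t u v) = ⨆_{k : ℕ} ⨆ over all walks p of length k from u to v of ⨅_{i=0}^{k-1} w (p i) (p (i+1)) (the supremum over all walks of any length of the minimum edge capacity along the walk, with the empty infimum for k = 0 equal to ∞). -/

import Mathlib

open ENNReal

/-- The (max, min) generalized Bellman–Ford iterates for widest path:
`W 0 u v = if u = v then ∞ else 0` and
`W (t+1) u v = max (⨆ x, min (W t u x) (w x v)) (W 0 u v)`. -/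
noncomputable def maxMinBF {V : Type*} [Fintype V] [DecidableEq V]
    (w : Matrix V V ℝ≥0∞) : ℕ → V → V → ℝ≥0∞
  | 0 => fun u v => if u = v then ∞ else 0
  | t + 1 => fun u v =>
      max (⨆ x : V, min (maxMinBF w t u x) (w x v)) (if u = v then ∞ else 0)

lemma iInf_fin_split {α : Type*} [CompleteLattice α] {n : ℕ} (f : Fin (n+1) → α) :
    ⨅ i, f i = (⨅ i : Fin n, f i.castSucc) ⊓ f (Fin.last n) := by
  apply le_antisymm
  · exact le_inf (le_iInf fun i => iInf_le _ _) (iInf_le _ _)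
  · refine le_iInf fun i => ?_
    induction i using Fin.lastCases with
    | last => exact inf_le_right
    | cast i => exact inf_le_left.trans (iInf_le _ i)

noncomputable def widest {V : Type*} [Fintype V] (w : Matrix V V ℝ≥0∞) (u v : V) : ℝ≥0∞ :=
  ⨆ k : ℕ, ⨆ p : {p : Fin (k + 1) → V // p 0 = u ∧ p (Fin.last k) = v},
    ⨅ i : Fin k, w (p.1 i.castSucc) (p.1 i.succ)

lemma walk_le_widest {V : Type*} [Fintype V] (w : Matrix V V ℝ≥0∞) (u v : V)
    (k : ℕ) (p : Fin (k+1) → V) (h0 : p 0 = u) (hl : p (Fin.last k) = v) :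
    (⨅ i : Fin k, w (p i.castSucc) (p i.succ)) ≤ widest w u v := by
  rw [widest]
  exact le_trans (le_iSup (fun q : {p : Fin (k + 1) → V // p 0 = u ∧ p (Fin.last k) = v} =>
      ⨅ i : Fin k, w (q.1 i.castSucc) (q.1 i.succ)) ⟨p, h0, hl⟩)
    (le_iSup (fun k => ⨆ p : {p : Fin (k + 1) → V // p 0 = u ∧ p (Fin.last k) = v},
      ⨅ i : Fin k, w (p.1 i.castSucc) (p.1 i.succ)) k)

lemma diag_le_widest {V : Type*} [Fintype V] [DecidableEq V] (w : Matrix V V ℝ≥0∞) (u v : V) :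
    (if u = v then (∞ : ℝ≥0∞) else 0) ≤ widest w u v := by
  split
  · next h =>
    have h2 := walk_le_widest w u v 0 (fun _ => u) rfl h
    exact le_trans (iInf_of_empty _).ge h2
  · exact zero_le

lemma walk_le_BF {V : Type*} [Fintype V] [DecidableEq V] (w : Matrix V V ℝ≥0∞) :
    ∀ (k : ℕ) (u v : V) (p : Fin (k+1) → V), p 0 = u → p (Fin.last k) = v →
    (⨅ i : Fin k, w (p i.castSucc) (p i.succ)) ≤ maxMinBF w k u v := by
  intro k
  induction k with
  | zero =>
    intro u v p h0 hl
    have : u = v := by rw [← h0, ← hl]; rfl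
    simp [maxMinBF, this]
  | succ k ih =>
    intro u v p h0 hl
    set x := p (Fin.last k).castSucc with hx
    have key : (⨅ i : Fin (k+1), w (p i.castSucc) (p i.succ)) =
        (⨅ i : Fin k, w ((fun j : Fin (k+1) => p j.castSucc) i.castSucc)
          ((fun j : Fin (k+1) => p j.castSucc) i.succ)) ⊓ w x v := by
      rw [iInf_fin_split (fun i : Fin (k+1) => w (p i.castSucc) (p i.succ))]
      refine congrArg₂ (· ⊓ ·) (iInf_congr fun i => ?_) ?_
      · rw [Fin.succ_castSucc]
      · rw [Fin.succ_last, hl]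
    rw [key]
    have h1 : (⨅ i : Fin k, w ((fun j : Fin (k+1) => p j.castSucc) i.castSucc)
          ((fun j : Fin (k+1) => p j.castSucc) i.succ)) ≤ maxMinBF w k u x :=
      ih u x (fun j => p j.castSucc) (by simpa using h0) rfl
    calc _ ≤ maxMinBF w k u x ⊓ w x v := inf_le_inf_right _ h1
      _ ≤ ⨆ y, min (maxMinBF w k u y) (w y v) := le_iSup (fun y => min (maxMinBF w k u y) (w y v)) x
      _ ≤ maxMinBF w (k+1) u v := le_max_left _ _

lemma BF_le_widest {V : Type*} [Fintype V] [DecidableEq V] (w : Matrix V V ℝ≥0∞) :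
    ∀ (t : ℕ) (u v : V), maxMinBF w t u v ≤ widest w u v := by
  intro t
  induction t with
  | zero => intro u v; exact diag_le_widest w u v
  | succ t ih =>
    intro u v
    refine max_le ?_ (diag_le_widest w u v)
    refine iSup_le fun x => ?_
    have h1 : min (maxMinBF w t u x) (w x v) ≤ min (widest w u x) (w x v) :=
      min_le_min (ih u x) le_rfl
    refine h1.trans ?_
    rw [widest, iSup_inf_eq]
    refine iSup_le fun k => ?_
    rw [iSup_inf_eq]
    refine iSup_le fun p => ?_
    -- extend walk p (u → x) by v
    set q : Fin (k+2) → V := Fin.snoc p.1 v with hq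
    have hq0 : q 0 = u := by
      have : q 0 = q (Fin.castSucc 0) := rfl
      rw [this, hq, Fin.snoc_castSucc, p.2.1]
    have hql : q (Fin.last (k+1)) = v := by rw [hq, Fin.snoc_last]
    have key : (⨅ i : Fin (k+1), w (q i.castSucc) (q i.succ)) =
        (⨅ i : Fin k, w (p.1 i.castSucc) (p.1 i.succ)) ⊓ w x v := by
      rw [iInf_fin_split (fun i : Fin (k+1) => w (q i.castSucc) (q i.succ))]
      refine congrArg₂ (· ⊓ ·) (iInf_congr fun i => ?_) ?_
      · have e1 : q i.castSucc.castSucc = p.1 i.castSucc := Fin.snoc_castSucc _ _ _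
        have e2 : q i.castSucc.succ = p.1 i.succ := by
          rw [Fin.succ_castSucc]; exact Fin.snoc_castSucc _ _ _
        rw [e1, e2]
      · have e1 : q (Fin.last k).castSucc = x := by
          rw [hq, Fin.snoc_castSucc, p.2.2]
        have e2 : q (Fin.last k).succ = v := by rw [Fin.succ_last]; exact hql
        rw [e1, e2]
    rw [← key]
    exact walk_le_widest w u v (k+1) q hq0 hql

lemma maxMinBF_le_succ {V : Type*} [Fintype V] [DecidableEq V]
    (w : Matrix V V ℝ≥0∞) : ∀ t u v, maxMinBF w t u v ≤ maxMinBF w (t+1) u v := by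
  intro t
  induction t with
  | zero => intro u v; exact le_max_right _ _
  | succ t ih =>
    intro u v
    refine max_le_max ?_ le_rfl
    exact iSup_mono fun x => min_le_min (ih u x) le_rfl

theorem maxMinBF_monotone_and_iSup_eq_widest_path {V : Type*} [Fintype V] [DecidableEq V]
    (w : Matrix V V ℝ≥0∞) (u v : V) :
    Monotone (fun t : ℕ => maxMinBF w t u v) ∧
      (⨆ t : ℕ, maxMinBF w t u v) =
        ⨆ k : ℕ, ⨆ p : {p : Fin (k + 1) → V // p 0 = u ∧ p (Fin.last k) = v},
          ⨅ i : Fin k, w (p.1 i.castSucc) (p.1 i.succ) := by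
  constructor
  · exact monotone_nat_of_le_succ fun t => maxMinBF_le_succ w t u v
  · show (⨆ t : ℕ, maxMinBF w t u v) = widest w u v
    apply le_antisymm
    · exact iSup_le fun t => BF_le_widest w t u v
    · rw [widest]
      refine iSup_le fun k => iSup_le fun p => ?_
      exact le_trans (walk_le_BF w k u v p.1 p.2.1 p.2.2)
        (le_iSup (fun t => maxMinBF w t u v) k)
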